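/- Let A₀ : X₀ → Y₀, A₁ : X₁ → Y₁ be nonzero operators, ε > 0, ξ a limit ordinal, K₀ ⊆ B_{Y₀*} and K₁ ⊆ B_{Y₁*} weak*-compact, and M ⊆ [0, ξ) cofinal. Then ⋂_{ζ∈M} [⟨K₀⟩_{A₀,ε}^ζ, K₁] ⊆ [⟨K₀⟩_{A₀,ε}^ξ, K₁], where [K, L] = {y₀* ⊗ y₁* : y₀* ∈ K, y₁* ∈ L} ⊆ (Y₀ ⊗̂_ε Y₁)*. -/

import Mathlib

open Ordinal
namespace PaperAUS

/-- Szlenk derivation: points of `K` every weak*-neighborhood of which has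
norm-diameter greater than `ε`. -/
def szDeriv {X : Type*} [NormedAddCommGroup X] [NormedSpace ℝ X]
    (K : Set (WeakDual ℝ X)) (ε : ℝ) : Set (WeakDual ℝ X) :=
  {x ∈ K | ∀ V ∈ nhds x, ∃ y ∈ V ∩ K, ∃ z ∈ V ∩ K,
    ε < ‖WeakDual.toStrongDual y - WeakDual.toStrongDual z‖}

/-- The `B`-relative Szlenk-type derivation `⟨K⟩_{B,ε}`. -/
def szDerivB {E F : Type*} [NormedAddCommGroup E] [NormedSpace ℝ E]
    [NormedAddCommGroup F] [NormedSpace ℝ F] (B : E →L[ℝ] F)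
    (K : Set (WeakDual ℝ F)) (ε : ℝ) : Set (WeakDual ℝ F) :=
  {f ∈ K | ∀ V ∈ nhds f, ∃ g ∈ V ∩ K, ∃ h ∈ V ∩ K,
    ε < ‖(WeakDual.toStrongDual g).comp B - (WeakDual.toStrongDual h).comp B‖}

/-- Transfinite iterates `⟨K⟩_{B,ε}^ξ`. -/
noncomputable def szDerivBIter {E F : Type*} [NormedAddCommGroup E] [NormedSpace ℝ E]
    [NormedAddCommGroup F] [NormedSpace ℝ F] (B : E →L[ℝ] F)
    (K : Set (WeakDual ℝ F)) (ε : ℝ) (ξ : Ordinal) : Set (WeakDual ℝ F) :=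
  Ordinal.limitRecOn ξ K (fun _ ih => szDerivB B ih ε)
    (fun o _ ih => ⋂ ζ : Set.Iio o, ih ζ ζ.2)

end PaperAUS
namespace PaperAUS

/-- `[K₀, K₁]`: the set of elementary tensors `y₀* ⊗ y₁*` with `y₀* ∈ K₀`, `y₁* ∈ K₁`,
realized as operator-valued bilinear maps (so that the norm is the injective tensor norm). -/
noncomputable def elemTensorSet {Y₀ Y₁ : Type*} [NormedAddCommGroup Y₀] [NormedSpace ℝ Y₀]
    [NormedAddCommGroup Y₁] [NormedSpace ℝ Y₁]
    (K₀ : Set (WeakDual ℝ Y₀)) (K₁ : Set (WeakDual ℝ Y₁)) :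
    Set (Y₀ →L[ℝ] (Y₁ →L[ℝ] ℝ)) :=
  {u | ∃ f ∈ K₀, ∃ g ∈ K₁,
    u = (WeakDual.toStrongDual f).smulRight (WeakDual.toStrongDual g)}

section Aux

variable {E F : Type*} [NormedAddCommGroup E] [NormedSpace ℝ E]
  [NormedAddCommGroup F] [NormedSpace ℝ F]

lemma szDerivB_subset (B : E →L[ℝ] F) (K : Set (WeakDual ℝ F)) (ε : ℝ) :
    szDerivB B K ε ⊆ K := fun _ hf => hf.1

lemma szDerivBIter_zero (B : E →L[ℝ] F) (K : Set (WeakDual ℝ F)) (ε : ℝ) :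
    szDerivBIter B K ε 0 = K :=
  Ordinal.limitRecOn_zero _ _ _

lemma szDerivBIter_succ (B : E →L[ℝ] F) (K : Set (WeakDual ℝ F)) (ε : ℝ) (ζ : Ordinal) :
    szDerivBIter B K ε (Order.succ ζ) = szDerivB B (szDerivBIter B K ε ζ) ε :=
  Ordinal.limitRecOn_succ _ _ _ _

lemma szDerivBIter_limit (B : E →L[ℝ] F) (K : Set (WeakDual ℝ F)) (ε : ℝ)
    {ξ : Ordinal} (h : Order.IsSuccLimit ξ) :
    szDerivBIter B K ε ξ = ⋂ ζ : Set.Iio ξ, szDerivBIter B K ε ζ :=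
  Ordinal.limitRecOn_limit _ _ _ _ h

lemma szDerivBIter_antitone (B : E →L[ℝ] F) (K : Set (WeakDual ℝ F)) (ε : ℝ) :
    ∀ ξ ζ : Ordinal, ζ ≤ ξ → szDerivBIter B K ε ξ ⊆ szDerivBIter B K ε ζ := by
  intro ξ
  induction ξ using Ordinal.limitRecOn with
  | zero =>
    intro ζ hζ
    rw [nonpos_iff_eq_zero.mp hζ]
  | add_one o ih =>
    rw [Ordinal.add_one_eq_succ]
    intro ζ hζ
    rcases eq_or_lt_of_le hζ with h | h
    · rw [h]
    · have hζo : ζ ≤ o := Order.lt_succ_iff.mp h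
      calc szDerivBIter B K ε (Order.succ o)
          = szDerivB B (szDerivBIter B K ε o) ε := szDerivBIter_succ B K ε o
        _ ⊆ szDerivBIter B K ε o := szDerivB_subset _ _ _
        _ ⊆ szDerivBIter B K ε ζ := ih ζ hζo
  | limit o ho ih =>
    intro ζ hζ
    rcases eq_or_lt_of_le hζ with h | h
    · rw [h]
    · rw [szDerivBIter_limit B K ε ho]
      exact Set.iInter_subset (fun η : Set.Iio o => szDerivBIter B K ε η) ⟨ζ, h⟩

lemma isClosed_szDerivB (B : E →L[ℝ] F) {K : Set (WeakDual ℝ F)} (hK : IsClosed K)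
    (ε : ℝ) : IsClosed (szDerivB B K ε) := by
  refine isClosed_of_closure_subset fun f hf => ?_
  have hfK : f ∈ K := hK.closure_subset (closure_mono (szDerivB_subset B K ε) hf)
  refine ⟨hfK, fun V hV => ?_⟩
  obtain ⟨W, hWV, hWopen, hfW⟩ := mem_nhds_iff.mp hV
  obtain ⟨f', hf'W, hf'S⟩ := mem_closure_iff.mp hf W hWopen hfW
  obtain ⟨g, hg, h, hh, hgh⟩ := hf'S.2 W (hWopen.mem_nhds hf'W)
  exact ⟨g, ⟨hWV hg.1, hg.2⟩, h, ⟨hWV hh.1, hh.2⟩, hgh⟩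

lemma isClosed_szDerivBIter (B : E →L[ℝ] F) {K : Set (WeakDual ℝ F)} (hK : IsClosed K)
    (ε : ℝ) (ξ : Ordinal) : IsClosed (szDerivBIter B K ε ξ) := by
  induction ξ using Ordinal.limitRecOn with
  | zero => rwa [szDerivBIter_zero]
  | add_one o ih => rw [Ordinal.add_one_eq_succ, szDerivBIter_succ]; exact isClosed_szDerivB B ih ε
  | limit o ho ih =>
    rw [szDerivBIter_limit B K ε ho]
    exact isClosed_iInter fun ζ => ih ζ ζ.2

end Aux

lemma isClosed_tensor_eq {Y₀ Y₁ : Type*} [NormedAddCommGroup Y₀] [NormedSpace ℝ Y₀]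
    [NormedAddCommGroup Y₁] [NormedSpace ℝ Y₁] (u : Y₀ →L[ℝ] (Y₁ →L[ℝ] ℝ)) :
    IsClosed {p : WeakDual ℝ Y₀ × WeakDual ℝ Y₁ |
      (WeakDual.toStrongDual p.1).smulRight (WeakDual.toStrongDual p.2) = u} := by
  have hset : {p : WeakDual ℝ Y₀ × WeakDual ℝ Y₁ |
      (WeakDual.toStrongDual p.1).smulRight (WeakDual.toStrongDual p.2) = u}
      = ⋂ (y₀ : Y₀) (y₁ : Y₁),
        {p : WeakDual ℝ Y₀ × WeakDual ℝ Y₁ | p.1 y₀ * p.2 y₁ = u y₀ y₁} := by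
    ext p
    simp only [Set.mem_setOf_eq, Set.mem_iInter, ContinuousLinearMap.ext_iff,
      ContinuousLinearMap.smulRight_apply]
    constructor
    · intro h y₀ y₁
      have := h y₀ y₁
      simpa [_root_.smul_eq_mul] using this
    · intro h y₀ y₁
      have := h y₀ y₁
      simpa [_root_.smul_eq_mul] using this
  rw [hset]
  refine isClosed_iInter fun y₀ => isClosed_iInter fun y₁ => isClosed_eq ?_ continuous_const
  exact ((WeakDual.eval_continuous y₀).comp continuous_fst).mul
    ((WeakDual.eval_continuous y₁).comp continuous_snd)

/-- at a limit ordinal `ξ`, elementary tensors lying in `[⟨K₀⟩^ζ, K₁]` for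
cofinally many `ζ < ξ` lie in `[⟨K₀⟩^ξ, K₁]`. -/
theorem iInter_elemTensorSet_subset {X₀ Y₀ X₁ Y₁ : Type*}
    [NormedAddCommGroup X₀] [NormedSpace ℝ X₀] [NormedAddCommGroup Y₀] [NormedSpace ℝ Y₀]
    [NormedAddCommGroup X₁] [NormedSpace ℝ X₁] [NormedAddCommGroup Y₁] [NormedSpace ℝ Y₁]
    (A₀ : X₀ →L[ℝ] Y₀) (A₁ : X₁ →L[ℝ] Y₁) (h₀ : A₀ ≠ 0) (h₁ : A₁ ≠ 0)
    (ε : ℝ) (hε : 0 < ε) (ξ : Ordinal) (hξ : Order.IsSuccLimit ξ)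
    (K₀ : Set (WeakDual ℝ Y₀)) (hK₀c : IsCompact K₀)
    (hK₀b : ∀ f ∈ K₀, ‖WeakDual.toStrongDual f‖ ≤ 1)
    (K₁ : Set (WeakDual ℝ Y₁)) (hK₁c : IsCompact K₁)
    (hK₁b : ∀ f ∈ K₁, ‖WeakDual.toStrongDual f‖ ≤ 1)
    (M : Set Ordinal) (hM : M ⊆ Set.Iio ξ) (hcof : ∀ ζ < ξ, ∃ η ∈ M, ζ ≤ η) :
    ⋂ ζ ∈ M, elemTensorSet (szDerivBIter A₀ K₀ ε ζ) K₁ ⊆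
      elemTensorSet (szDerivBIter A₀ K₀ ε ξ) K₁ := by
  intro u hu
  obtain ⟨η₀, hη₀M, -⟩ := hcof 0 hξ.pos
  haveI : Nonempty M := ⟨⟨η₀, hη₀M⟩⟩
  -- the compact sets of factorization pairs
  set S : M → Set (WeakDual ℝ Y₀ × WeakDual ℝ Y₁) := fun ζ =>
    ((szDerivBIter A₀ K₀ ε ζ) ×ˢ K₁) ∩
      {p | (WeakDual.toStrongDual p.1).smulRight (WeakDual.toStrongDual p.2) = u}
      with hS
  have hIterClosed : ∀ ζ : Ordinal, IsClosed (szDerivBIter A₀ K₀ ε ζ) :=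
    fun ζ => isClosed_szDerivBIter A₀ hK₀c.isClosed ε ζ
  have hIterSubK₀ : ∀ ζ : Ordinal, szDerivBIter A₀ K₀ ε ζ ⊆ K₀ := by
    intro ζ
    have := szDerivBIter_antitone A₀ K₀ ε ζ 0 (zero_le ..)
    rwa [szDerivBIter_zero] at this
  have hSclosed : ∀ ζ : M, IsClosed (S ζ) := fun ζ =>
    ((hIterClosed ζ).prod hK₁c.isClosed).inter (isClosed_tensor_eq u)
  have hScompact : ∀ ζ : M, IsCompact (S ζ) := fun ζ =>
    ((hK₀c.prod hK₁c).of_isClosed_subset (hSclosed ζ))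
      (fun p hp => ⟨hIterSubK₀ ζ hp.1.1, hp.1.2⟩)
  have hSnonempty : ∀ ζ : M, (S ζ).Nonempty := by
    rintro ⟨ζ, hζ⟩
    have := Set.mem_iInter₂.mp hu ζ hζ
    obtain ⟨f, hf, g, hg, heq⟩ := this
    exact ⟨(f, g), ⟨⟨hf, hg⟩, heq.symm⟩⟩
  have hSanti : ∀ ζ η : M, (ζ : Ordinal) ≤ η → S η ⊆ S ζ := by
    rintro ζ η hle p ⟨⟨hp1, hp2⟩, hp3⟩
    exact ⟨⟨szDerivBIter_antitone A₀ K₀ ε η ζ hle hp1, hp2⟩, hp3⟩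
  have hdir : Directed (· ⊇ ·) S := by
    intro ζ η
    rcases le_total (ζ : Ordinal) (η : Ordinal) with h | h
    · exact ⟨η, hSanti ζ η h, subset_rfl⟩
    · exact ⟨ζ, subset_rfl, hSanti η ζ h⟩
  obtain ⟨⟨f, g⟩, hfg⟩ :=
    IsCompact.nonempty_iInter_of_directed_nonempty_isCompact_isClosed S hdir
      hSnonempty hScompact hSclosed
  have hfgmem : ∀ ζ : M, (f, g) ∈ S ζ := fun ζ => Set.mem_iInter.mp hfg ζ
  have hfξ : f ∈ szDerivBIter A₀ K₀ ε ξ := by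
    rw [szDerivBIter_limit A₀ K₀ ε hξ]
    refine Set.mem_iInter.mpr fun ⟨η, hη⟩ => ?_
    obtain ⟨ζ, hζM, hζ⟩ := hcof η hη
    exact szDerivBIter_antitone A₀ K₀ ε ζ η hζ (hfgmem ⟨ζ, hζM⟩).1.1
  obtain ⟨ζ⟩ := ‹Nonempty M›
  exact ⟨f, hfξ, g, (hfgmem ζ).1.2, ((hfgmem ζ).2).symm⟩

end PaperAUS
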